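/- Let d ≥ 2 and let (c({x,y}))_{x,y} be nonnegative conductances on nearest-neighbor edges of ℤ^d, stationary under shifts, with E[q(0)] < ∞ where q(x) = Σ_{‖y−x‖₁=1} c({x,y}). Let 𝒞(x) denote the cluster of x in the graph of strictly positive conductances, κ the associated random walk transition matrix, and K the induced 'environment viewed from the particle' kernel (Kf)(π) = Σ_z π(0,z) f(shift_z π). Assume P[#𝒞(0) = ∞] > 0 and define the measure Q[B] := E[q(0); {κ ∈ B} ∩ {#𝒞(0) = ∞}] / E[q(0); #𝒞(0) = ∞] on environments. Then Q is invariant for K, i.e. ∫ (Kf) dQ = ∫ f dQ for all bounded measurable f. -/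

import Mathlib

open MeasureTheory

noncomputable section

variable (d : ℕ)

/-- Conductance/environment fields on `ℤ^d`: functions of ordered pairs of sites. -/
abbrev EnvSpace (d : ℕ) := (Fin d → ℤ) → (Fin d → ℤ) → ℝ

/-- `ℓ¹`-distance on `ℤ^d`. -/
def l1dist {d : ℕ} (x y : Fin d → ℤ) : ℤ := ∑ i, |x i - y i|

/-- `q(x) = ∑_{‖y-x‖₁ = 1} c(x,y)`, the total conductance at `x`. -/
def qfun {d : ℕ} (c : EnvSpace d) (x : Fin d → ℤ) : ℝ :=
  ∑' y : Fin d → ℤ, if l1dist x y = 1 then c x y else 0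

/-- The random-walk transition matrix `κ` associated to the conductances `c`. -/
def kappaE {d : ℕ} (c : EnvSpace d) : EnvSpace d := fun x y =>
  if qfun c x ≠ 0 ∧ l1dist x y = 1 then c x y / qfun c x
  else if qfun c x = 0 ∧ x = y then 1 else 0

/-- One step along an edge of strictly positive conductance. -/
def posStep {d : ℕ} (c : EnvSpace d) (x y : Fin d → ℤ) : Prop :=
  l1dist x y = 1 ∧ 0 < c x y

/-- The cluster of `x`: all sites connected to `x` by a path of positive conductances. -/
def cluster {d : ℕ} (c : EnvSpace d) (x : Fin d → ℤ) : Set (Fin d → ℤ) :=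
  {y | Relation.ReflTransGen (posStep c) x y}

/-- The shift of an environment by `z`. -/
def shiftE {d : ℕ} (z : Fin d → ℤ) (π : EnvSpace d) : EnvSpace d :=
  fun x y => π (x + z) (y + z)

/-- The `environment viewed from the particle` transition operator:
`(Kf)(π) = ∑_z π(0,z) f(shift_z π)`. -/
def Kop {d : ℕ} (f : EnvSpace d → ℝ) (π : EnvSpace d) : ℝ :=
  ∑' z : Fin d → ℤ, π 0 z * f (shiftE z π)

/- ### Auxiliary lemmas -/

lemma l1dist_comm {d : ℕ} (x y : Fin d → ℤ) : l1dist x y = l1dist y x := by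
  unfold l1dist; exact Finset.sum_congr rfl (fun i _ => abs_sub_comm _ _)

lemma l1dist_shift {d : ℕ} (x y z : Fin d → ℤ) : l1dist (x + z) (y + z) = l1dist x y := by
  unfold l1dist; refine Finset.sum_congr rfl (fun i _ => ?_)
  simp only [Pi.add_apply]; ring_nf

lemma l1dist_neg {d : ℕ} (z : Fin d → ℤ) : l1dist 0 (-z) = l1dist 0 z := by
  unfold l1dist
  refine Finset.sum_congr rfl (fun i _ => ?_)
  simp

lemma nbr_finite (d : ℕ) : {z : Fin d → ℤ | l1dist 0 z = 1}.Finite := by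
  apply Set.Finite.subset (Set.Finite.pi (t := fun _ : Fin d => ({-1,0,1} : Set ℤ)) (fun _ => by
    apply Set.Finite.insert; apply Set.Finite.insert; exact Set.finite_singleton _))
  intro z hz i _
  have h1 : |z i| ≤ 1 := by
    have := Finset.single_le_sum (f := fun i => |(0 : Fin d → ℤ) i - z i|)
      (fun j _ => abs_nonneg _) (Finset.mem_univ i)
    simp only [Pi.zero_apply, zero_sub, abs_neg] at this
    rw [Set.mem_setOf_eq] at hz; unfold l1dist at hz
    simp only [Pi.zero_apply, zero_sub, abs_neg] at hz
    omega
  have := abs_le.mp h1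
  simp only [Set.mem_insert_iff, Set.mem_singleton_iff]
  omega

/-- The neighbours of the origin, as a finset. -/
def nbr (d : ℕ) : Finset (Fin d → ℤ) := (nbr_finite d).toFinset

lemma mem_nbr {d : ℕ} {z : Fin d → ℤ} : z ∈ nbr d ↔ l1dist 0 z = 1 := by
  simp [nbr, Set.Finite.mem_toFinset]

lemma qfun_zero_eq_sum {d : ℕ} (c : EnvSpace d) :
    qfun c 0 = ∑ z ∈ nbr d, c 0 z := by
  unfold qfun
  rw [tsum_eq_sum (s := nbr d) (fun b hb => by rw [if_neg (by simpa [mem_nbr] using hb)])]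
  exact Finset.sum_congr rfl (fun z hz => by rw [if_pos (mem_nbr.mp hz)])

lemma qfun_shift {d : ℕ} (c : EnvSpace d) (x z : Fin d → ℤ) :
    qfun (shiftE z c) x = qfun c (x + z) := by
  unfold qfun shiftE
  rw [← Equiv.tsum_eq (Equiv.addRight z) (fun y => if l1dist (x+z) y = 1 then c (x+z) y else 0)]
  refine tsum_congr (fun y => ?_)
  simp only [Equiv.coe_addRight]
  simp only [l1dist_shift]

lemma kappaE_shift {d : ℕ} (c : EnvSpace d) (z : Fin d → ℤ) :
    kappaE (shiftE z c) = shiftE z (kappaE c) := by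
  funext x y
  show kappaE (shiftE z c) x y = kappaE c (x + z) (y + z)
  unfold kappaE
  rw [qfun_shift, l1dist_shift]
  show _ = (if qfun c (x+z) ≠ 0 ∧ l1dist x y = 1 then shiftE z c x y / qfun c (x+z)
    else if qfun c (x+z) = 0 ∧ x + z = y + z then 1 else 0)
  congr 2
  simp [add_left_inj]

lemma cluster_shift_infinite {d : ℕ} (c : EnvSpace d) (z : Fin d → ℤ) :
    (cluster (shiftE z c) 0).Infinite ↔ (cluster c z).Infinite := by
  have key : cluster (shiftE z c) 0 = (fun y => y + z) ⁻¹' (cluster c z) := by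
    ext y
    constructor
    · intro h
      have := Relation.ReflTransGen.lift (r := posStep (shiftE z c)) (p := posStep c)
        (fun w => w + z)
        (fun a b hab => ⟨by rw [l1dist_shift]; exact hab.1, hab.2⟩) _ _ h
      simpa [Function.onFun, cluster] using this
    · intro h
      have := Relation.ReflTransGen.lift (r := posStep c) (p := posStep (shiftE z c))
        (fun w => w - z)
        (fun a b hab => ⟨by
          have : l1dist (a - z + z) (b - z + z) = 1 := by simpa using hab.1
          rwa [l1dist_shift] at this, by
          show 0 < c (a - z + z) (b - z + z); simpa using hab.2⟩) _ _ h
      simpa [Function.onFun, cluster] using this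
  rw [key]
  constructor
  · intro h
    by_contra hfin
    exact h ((Set.not_infinite.mp hfin).preimage (Function.Injective.injOn (add_left_injective z)))
  · intro h
    refine h.preimage ?_
    rw [Set.range_eq_univ.mpr (fun y => ⟨y - z, by simp⟩)]
    exact Set.subset_univ _

lemma cluster_eq_of_step {d : ℕ} {c : EnvSpace d} (hsy : ∀ x y, c x y = c y x)
    {z : Fin d → ℤ} (h : posStep c 0 z) : cluster c 0 = cluster c z := by
  have hsym : Symmetric (posStep c) := fun a b hab => ⟨by rw [l1dist_comm]; exact hab.1,
    by rw [hsy]; exact hab.2⟩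
  have hsRT : ∀ {a b}, Relation.ReflTransGen (posStep c) a b → Relation.ReflTransGen (posStep c) b a :=
    fun hab => (@Relation.ReflTransGen.symmetric _ _ ⟨fun a b h => hsym h⟩).symm _ _ hab
  ext y
  constructor
  · intro hy; exact Relation.ReflTransGen.trans (hsRT (Relation.ReflTransGen.single h)) hy
  · intro hy; exact Relation.ReflTransGen.trans (Relation.ReflTransGen.single h) hy

/-- On the infinite cluster event, for a pointwise nonnegative environment, `q(0) > 0`. -/
lemma qfun_pos {d : ℕ} {c : EnvSpace d} (hnn : ∀ x y, 0 ≤ c x y)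
    (hS : (cluster c 0).Infinite) : 0 < qfun c 0 := by
  obtain ⟨y, hy⟩ := (hS.diff (Set.finite_singleton 0)).nonempty
  have hy0 : y ≠ 0 := by simpa using hy.2
  rcases Relation.ReflTransGen.cases_head hy.1 with h | ⟨b, hb, -⟩
  · exact absurd h.symm hy0
  · have hble : c 0 b ≤ qfun c 0 := by
      rw [qfun_zero_eq_sum]
      exact Finset.single_le_sum (fun z _ => hnn 0 z) (mem_nbr.mpr hb.1)
    exact lt_of_lt_of_le hb.2 hble

lemma eval_measurable {d : ℕ} (x y : Fin d → ℤ) :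
    Measurable (fun π : EnvSpace d => π x y) :=
  (measurable_pi_apply y).comp (measurable_pi_apply x)

lemma shiftE_measurable {d : ℕ} (z : Fin d → ℤ) :
    Measurable (shiftE (d := d) z) :=
  measurable_pi_lambda _ (fun x => measurable_pi_lambda _ (fun y => eval_measurable (x+z) (y+z)))


/-- Finite-sum version of `Kop f`. -/
def gF {d : ℕ} (f : EnvSpace d → ℝ) (π : EnvSpace d) : ℝ :=
  ∑ z ∈ nbr d, π 0 z * f (shiftE z π)

def termF {d : ℕ} (Sset : Set (EnvSpace d)) (f : EnvSpace d → ℝ) (z : Fin d → ℤ)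
    (c : EnvSpace d) : ℝ :=
  Sset.indicator (fun c => c 0 z * f (kappaE (shiftE z c))) c

def GF {d : ℕ} (Sset : Set (EnvSpace d)) (f : EnvSpace d → ℝ) (z : Fin d → ℤ)
    (π : EnvSpace d) : ℝ :=
  Sset.indicator (fun π => π (-z) 0 * f (kappaE π)) π

lemma qfun_nonneg {d : ℕ} {c : EnvSpace d} (hnn : ∀ x y, 0 ≤ c x y) : 0 ≤ qfun c 0 := by
  rw [qfun_zero_eq_sum]; exact Finset.sum_nonneg (fun z _ => hnn 0 z)

theorem stmt13 (hd : 2 ≤ d) (P : Measure (EnvSpace d)) [IsProbabilityMeasure P]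
    (hnn : ∀ᵐ c ∂P, ∀ x y, 0 ≤ c x y)
    (hsymm : ∀ᵐ c ∂P, ∀ x y, c x y = c y x)
    (hsupp : ∀ᵐ c ∂P, ∀ x y, l1dist x y ≠ 1 → c x y = 0)
    (hstat : ∀ z : Fin d → ℤ, Measure.map (shiftE z) P = P)
    (hq : Integrable (fun c => qfun c 0) P)
    (hκmeas : Measurable (kappaE (d := d)))
    (hClmeas : MeasurableSet {c : EnvSpace d | (cluster c 0).Infinite})
    (hpos : 0 < P {c : EnvSpace d | (cluster c 0).Infinite})
    (Q : Measure (EnvSpace d))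
    (hQ : Q = ((((P.withDensity (fun c => ENNReal.ofReal (qfun c 0))).restrict
        {c : EnvSpace d | (cluster c 0).Infinite}).map kappaE Set.univ)⁻¹) •
      (((P.withDensity (fun c => ENNReal.ofReal (qfun c 0))).restrict
        {c : EnvSpace d | (cluster c 0).Infinite}).map kappaE)) :
    ∀ f : EnvSpace d → ℝ, Measurable f → (∃ Cb : ℝ, ∀ π, |f π| ≤ Cb) →
      ∫ π, Kop f π ∂Q = ∫ π, f π ∂Q := by
  intro f hf hbd
  classical
  obtain ⟨Cb, hCb⟩ := hbd
  have hCb0 : 0 ≤ Cb := le_trans (abs_nonneg _) (hCb (fun _ _ => 0))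
  set S : Set (EnvSpace d) := {c : EnvSpace d | (cluster c 0).Infinite} with hSdef
  set h : EnvSpace d → ENNReal := fun c => ENNReal.ofReal (qfun c 0) with hhdef
  set μ : Measure (EnvSpace d) := (P.withDensity h).restrict S with hμdef
  set ν : Measure (EnvSpace d) := μ.map kappaE with hνdef
  -- reduce to invariance of the unnormalised measure ν
  suffices main : ∫ π, Kop f π ∂ν = ∫ π, f π ∂ν by
    rw [hQ, integral_smul_measure, integral_smul_measure, main]
  -- absolute continuity μ ≪ P
  have hμP : μ ≪ P := by
    refine Measure.AbsolutelyContinuous.trans ?_ (withDensity_absolutelyContinuous P h)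
    exact Measure.absolutelyContinuous_of_le (Measure.restrict_le_self)
  have hnnμ : ∀ᵐ c ∂μ, ∀ x y, 0 ≤ c x y := hnn.filter_mono hμP.ae_le
  have hmemS : ∀ᵐ c ∂μ, c ∈ S := ae_restrict_mem hClmeas
  -- measurability facts
  have hg : Measurable (gF f) :=
    Finset.measurable_sum _ (fun z _ => (eval_measurable 0 z).mul (hf.comp (shiftE_measurable z)))
  have hterm_meas : ∀ z, Measurable (termF S f z) := fun z =>
    ((eval_measurable 0 z).mul (hf.comp (hκmeas.comp (shiftE_measurable z)))).indicator hClmeas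
  have hG_meas : ∀ z, Measurable (GF S f z) := fun z =>
    ((eval_measurable (-z) 0).mul (hf.comp hκmeas)).indicator hClmeas
  -- the support set T
  have hT : MeasurableSet {π : EnvSpace d | ∀ z ∉ nbr d, π 0 z = 0} := by
    have hrw : {π : EnvSpace d | ∀ z ∉ nbr d, π 0 z = 0}
        = ⋂ z, {π : EnvSpace d | z ∉ nbr d → π 0 z = 0} := by ext π; simp
    rw [hrw]
    refine MeasurableSet.iInter (fun z => ?_)
    by_cases hz : z ∈ nbr d
    · have : {π : EnvSpace d | z ∉ nbr d → π 0 z = 0} = Set.univ := by ext π; simp [hz]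
      rw [this]; exact MeasurableSet.univ
    · have : {π : EnvSpace d | z ∉ nbr d → π 0 z = 0} = (fun π => π 0 z) ⁻¹' {0} := by
        ext π; simp [hz]
      rw [this]; exact eval_measurable 0 z (measurableSet_singleton 0)
  -- ν-a.e., transitions are supported on the neighbours of the origin
  have hνT : ∀ᵐ π ∂ν, ∀ z ∉ nbr d, π 0 z = 0 := by
    rw [hνdef, ae_map_iff hκmeas.aemeasurable hT]
    filter_upwards [hnnμ, hmemS] with c hcnn hcS
    intro z hz
    have hqpos : 0 < qfun c 0 := qfun_pos hcnn hcS
    show kappaE c 0 z = 0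
    unfold kappaE
    rw [if_neg, if_neg]
    · rintro ⟨hq0, -⟩; exact (ne_of_gt hqpos) hq0
    · rintro ⟨-, hl⟩; exact hz (mem_nbr.mpr hl)
  -- replace Kop f by its finite-sum version gF f
  have hKg : ∫ π, Kop f π ∂ν = ∫ π, gF f π ∂ν := by
    refine integral_congr_ae ?_
    filter_upwards [hνT] with π hπ
    show Kop f π = gF f π
    unfold Kop gF
    exact tsum_eq_sum (fun z hz => by rw [hπ z hz, zero_mul])
  have hmapg : ∫ π, gF f π ∂ν = ∫ c, gF f (kappaE c) ∂μ :=
    integral_map hκmeas.aemeasurable hg.aestronglyMeasurable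
  have hmapf : ∫ π, f π ∂ν = ∫ c, f (kappaE c) ∂μ :=
    integral_map hκmeas.aemeasurable hf.aestronglyMeasurable
  -- the integral over μ as an integral over P
  have intI : ∀ g0 : EnvSpace d → ℝ, Measurable g0 →
      ∫ c, g0 c ∂μ = ∫ c, S.indicator (fun c => qfun c 0 * g0 c) c ∂P := by
    intro g0 hg0
    have hqmr : AEMeasurable (fun c => (qfun c 0).toNNReal) (P.restrict S) :=
      measurable_real_toNNReal.comp_aemeasurable hq.aemeasurable.restrict
    rw [hμdef, restrict_withDensity hClmeas,
      show h = (fun c => (((qfun c 0).toNNReal : NNReal) : ENNReal)) from rfl,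
      integral_withDensity_eq_integral_smul₀ hqmr g0, ← integral_indicator hClmeas]
    refine integral_congr_ae ?_
    filter_upwards [hnn] with c hcnn
    rw [Set.indicator_apply, Set.indicator_apply]
    split
    · rw [NNReal.smul_def, Real.coe_toNNReal _ (qfun_nonneg hcnn), smul_eq_mul]
    · rfl
  -- integrability of the summands
  have hterm_int : ∀ z ∈ nbr d, Integrable (termF S f z) P := by
    intro z hz
    refine Integrable.mono (hq.const_mul Cb) (hterm_meas z).aestronglyMeasurable ?_
    filter_upwards [hnn] with c hcnn
    have h1 : ‖termF S f z c‖ ≤ Cb * qfun c 0 := by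
      rw [Real.norm_eq_abs]
      unfold termF
      by_cases hcS : c ∈ S
      · rw [Set.indicator_of_mem hcS, abs_mul, abs_of_nonneg (hcnn 0 z)]
        have hle : c 0 z ≤ qfun c 0 := by
          rw [qfun_zero_eq_sum]; exact Finset.single_le_sum (fun w _ => hcnn 0 w) hz
        calc c 0 z * |f (kappaE (shiftE z c))| ≤ c 0 z * Cb :=
              mul_le_mul_of_nonneg_left (hCb _) (hcnn 0 z)
          _ ≤ qfun c 0 * Cb := mul_le_mul_of_nonneg_right hle hCb0
          _ = Cb * qfun c 0 := mul_comm _ _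
      · rw [Set.indicator_of_notMem hcS, abs_zero]
        exact mul_nonneg hCb0 (qfun_nonneg hcnn)
    exact h1.trans (le_abs_self _)
  -- step A1 : pointwise identification of q·(gF f)∘κ with the summands
  have hA1 : ∀ᵐ c ∂P, S.indicator (fun c => qfun c 0 * gF f (kappaE c)) c
      = ∑ z ∈ nbr d, termF S f z c := by
    filter_upwards [hnn] with c hcnn
    by_cases hcS : c ∈ S
    · rw [Set.indicator_of_mem hcS]
      have hqpos : 0 < qfun c 0 := qfun_pos hcnn hcS
      unfold gF termF
      rw [Finset.mul_sum]
      refine Finset.sum_congr rfl (fun z hz => ?_)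
      rw [Set.indicator_of_mem hcS, kappaE_shift]
      have hκval : kappaE c 0 z = c 0 z / qfun c 0 := by
        unfold kappaE; rw [if_pos ⟨ne_of_gt hqpos, mem_nbr.mp hz⟩]
      rw [hκval]
      field_simp
    · rw [Set.indicator_of_notMem hcS]
      symm
      refine Finset.sum_eq_zero (fun z _ => ?_)
      exact Set.indicator_of_notMem hcS _
  -- step A4 : termF = GF ∘ shift, P-a.e.
  have hTG : ∀ᵐ c ∂P, ∀ z, termF S f z c = GF S f z (shiftE z c) := by
    filter_upwards [hnn, hsymm, hsupp] with c hcnn hcsy hcsp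
    intro z
    unfold termF GF
    have harg : (shiftE z c) (-z) 0 = c 0 z := by
      show c (-z + z) (0 + z) = c 0 z; rw [neg_add_cancel, zero_add]
    by_cases h0 : c 0 z = 0
    · rw [Set.indicator_apply_eq_zero.mpr (fun _ => by rw [h0, zero_mul]),
        Set.indicator_apply_eq_zero.mpr (fun _ => by rw [harg, h0, zero_mul])]
    · have hdz : l1dist 0 z = 1 := by
        by_contra hnd; exact h0 (hcsp 0 z hnd)
      have hstep : posStep c 0 z := ⟨hdz, lt_of_le_of_ne (hcnn 0 z) (Ne.symm h0)⟩
      have hSiff : c ∈ S ↔ shiftE z c ∈ S := by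
        rw [hSdef, Set.mem_setOf_eq, Set.mem_setOf_eq, cluster_shift_infinite,
          ← cluster_eq_of_step hcsy hstep]
      by_cases hcS : c ∈ S
      · rw [Set.indicator_of_mem hcS, Set.indicator_of_mem (hSiff.mp hcS), harg]
      · rw [Set.indicator_of_notMem hcS,
          Set.indicator_of_notMem (fun hh => hcS (hSiff.mpr hh))]
  -- stationarity transfer
  have hmapGz : ∀ z : Fin d → ℤ, ∫ c, GF S f z (shiftE z c) ∂P = ∫ π, GF S f z π ∂P := by
    intro z
    conv_rhs => rw [← hstat z]
    rw [integral_map (shiftE_measurable z).aemeasurable (hG_meas z).aestronglyMeasurable]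
  have hint_term : ∀ z ∈ nbr d, ∫ c, termF S f z c ∂P = ∫ π, GF S f z π ∂P := by
    intro z _
    rw [integral_congr_ae (g := fun c => GF S f z (shiftE z c))
      (by filter_upwards [hTG] with c hc using hc z), hmapGz z]
  -- integrability of GF
  have hG_int : ∀ z ∈ nbr d, Integrable (GF S f z) P := by
    intro z hz
    rw [← hstat z,
      integrable_map_measure (hG_meas z).aestronglyMeasurable (shiftE_measurable z).aemeasurable]
    refine Integrable.congr (hterm_int z hz) ?_
    filter_upwards [hTG] with c hc using hc z
  -- step A6 : resum the shifted terms
  have hA6 : ∀ᵐ c ∂P, (∑ z ∈ nbr d, GF S f z c)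
      = S.indicator (fun c => qfun c 0 * f (kappaE c)) c := by
    filter_upwards [hsymm] with c hcsy
    unfold GF
    by_cases hcS : c ∈ S
    · rw [Set.indicator_of_mem hcS]
      calc ∑ z ∈ nbr d, S.indicator (fun π => π (-z) 0 * f (kappaE π)) c
          = ∑ z ∈ nbr d, c 0 (-z) * f (kappaE c) := by
            refine Finset.sum_congr rfl (fun z _ => ?_)
            rw [Set.indicator_of_mem hcS, hcsy]
        _ = (∑ z ∈ nbr d, c 0 (-z)) * f (kappaE c) := by rw [Finset.sum_mul]
        _ = (∑ z ∈ nbr d, c 0 z) * f (kappaE c) := by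
            congr 1
            refine Finset.sum_equiv (Equiv.neg _) (fun z => ?_) (fun z _ => rfl)
            rw [mem_nbr, mem_nbr]
            show _ ↔ l1dist 0 (-z) = 1
            rw [l1dist_neg]
        _ = qfun c 0 * f (kappaE c) := by rw [qfun_zero_eq_sum]
    · rw [Set.indicator_of_notMem hcS]
      refine Finset.sum_eq_zero (fun z _ => ?_)
      exact Set.indicator_of_notMem hcS _
  -- assemble everything
  calc ∫ π, Kop f π ∂ν = ∫ π, gF f π ∂ν := hKg
    _ = ∫ c, gF f (kappaE c) ∂μ := hmapg
    _ = ∫ c, S.indicator (fun c => qfun c 0 * gF f (kappaE c)) c ∂P :=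
        intI _ (hg.comp hκmeas)
    _ = ∫ c, ∑ z ∈ nbr d, termF S f z c ∂P := integral_congr_ae hA1
    _ = ∑ z ∈ nbr d, ∫ c, termF S f z c ∂P := integral_finset_sum _ hterm_int
    _ = ∑ z ∈ nbr d, ∫ π, GF S f z π ∂P := Finset.sum_congr rfl hint_term
    _ = ∫ c, ∑ z ∈ nbr d, GF S f z c ∂P := (integral_finset_sum _ hG_int).symm
    _ = ∫ c, S.indicator (fun c => qfun c 0 * f (kappaE c)) c ∂P := integral_congr_ae hA6
    _ = ∫ c, f (kappaE c) ∂μ := (intI _ (hf.comp hκmeas)).symm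
    _ = ∫ π, f π ∂ν := hmapf.symm

end
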